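/- Let X be a type with decidable equality equipped with a linear order, and let A be a unital algebra over ℂ. Suppose γ : X → A and s : X → A satisfy the relations R': (R'₁) s x * s x = 1 and s x * s x' = s x' * s x for all x, x'; (R'₂) γ x * γ x' + γ x' * γ x = 2·1 if x = x' and = 0 if x ≠ x'; (R'₃) s x * γ x' * s x = −γ x' if x = x' and = γ x' if x ≠ x'. Define ξ x = Complex.I • (γ x * s x); for finsets J of X let Ξ_J, Γ_J denote the products of the ξ x, respectively γ x, for x ∈ J in increasing order, and S_J the product of the s x for x ∈ J. Let Q be a finset of X with |Q| even. Then Ξ_Q * Γ_J = Γ_J * Ξ_Q for every finset J of X, and Ξ_Q * S_V = S_V * Ξ_Q for every finset V of X with |Q ∩ V| even. (Hence all Ξ_Q with Q a Γ-admissible contour of even length lie in the commutant of the algebra generated by the triangle elements Γ_T and vertex elements S_V.) -/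

import Mathlib

/-- The ordered product of `f x` over `x ∈ J`, taken in increasing order. -/
def ordProd {X : Type*} [LinearOrder X] {A : Type*} [Monoid A]
    (f : X → A) (J : Finset X) : A :=
  ((J.sort (· ≤ ·)).map f).prod

/-- Generic sign-commutation lemma for list products. -/
lemma list_smul_comm {X : Type*} {A : Type*} [Ring A]
    (f : X → A) (ε : X → ℤ) (a : A) :
    ∀ l : List X, (∀ x ∈ l, a * f x = ε x • (f x * a)) →
      a * (l.map f).prod = ((l.map ε).prod) • ((l.map f).prod * a) := by
  intro l
  induction l with
  | nil => intro _; simp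
  | cons x l ih =>
    intro h
    have hx := h x (by simp)
    have hrest := ih (fun y hy => h y (List.mem_cons_of_mem _ hy))
    simp only [List.map_cons, List.prod_cons]
    calc a * (f x * (l.map f).prod) = (a * f x) * (l.map f).prod := (mul_assoc _ _ _).symm
      _ = (ε x • (f x * a)) * (l.map f).prod := by rw [hx]
      _ = ε x • (f x * (a * (l.map f).prod)) := by
          rw [smul_mul_assoc, mul_assoc]
      _ = ε x • (f x * (((l.map ε).prod) • ((l.map f).prod * a))) := by rw [hrest]
      _ = (ε x * (l.map ε).prod) • (f x * (l.map f).prod * a) := by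
          rw [mul_smul_comm, mul_smul, mul_assoc]

lemma sort_map_prod {X : Type*} [LinearOrder X] {M : Type*} [CommMonoid M]
    (g : X → M) (F : Finset X) :
    ((F.sort (· ≤ ·)).map g).prod = F.prod g := by
  rw [Finset.prod, ← Finset.sort_eq (s := F) (r := (· ≤ ·)), Multiset.map_coe, Multiset.prod_coe]

theorem stmt_16 {X : Type*} [DecidableEq X] [LinearOrder X] {A : Type*} [Ring A]
    [Algebra ℂ A]
    (γ s : X → A)
    (hR1a : ∀ x : X, s x * s x = 1)
    (hR1b : ∀ x x' : X, s x * s x' = s x' * s x)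
    (hR2 : ∀ x x' : X, γ x * γ x' + γ x' * γ x = if x = x' then (2 : A) * 1 else 0)
    (hR3 : ∀ x x' : X, s x * γ x' * s x = if x = x' then -γ x' else γ x')
    (ξ : X → A)
    (hξ : ∀ x : X, ξ x = Complex.I • (γ x * s x))
    (Q : Finset X) (hQ : Even Q.card) :
    (∀ J : Finset X, ordProd ξ Q * ordProd γ J = ordProd γ J * ordProd ξ Q) ∧
    (∀ V : Finset X, Even (Q ∩ V).card →
      ordProd ξ Q * ordProd s V = ordProd s V * ordProd ξ Q) := by
  -- γ x ^ 2 = 1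
  have hγ2 : ∀ x : X, γ x * γ x = 1 := by
    intro x
    have h := hR2 x x
    simp only [if_pos rfl, mul_one] at h
    have h2 : (2 : ℂ) • (γ x * γ x) = (2 : ℂ) • (1 : A) := by
      rw [two_smul, two_smul, h]
      simp [Algebra.smul_def]
      norm_num
    have := smul_right_injective A (two_ne_zero (α := ℂ)) h2
    exact this
  -- γ anticommute for distinct indices
  have hγa : ∀ x y : X, x ≠ y → γ x * γ y = -(γ y * γ x) := by
    intro x y hxy
    have h := hR2 x y
    rw [if_neg hxy] at h
    exact eq_neg_of_add_eq_zero_left h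
  -- s γ commutation
  have hsγ : ∀ x y : X, s x * γ y = (if x = y then -γ y else γ y) * s x := by
    intro x y
    have h := congrArg (· * s x) (hR3 x y)
    rw [mul_assoc, mul_assoc, hR1a, mul_one] at h
    rw [h]
  -- ξ anticommutes with every γ y
  have hξγ : ∀ x y : X, γ y * ξ x = (-1 : ℤ) • (ξ x * γ y) := by
    intro x y
    rw [hξ x]
    rw [mul_smul_comm, smul_mul_assoc, smul_comm]
    congr 1
    by_cases hxy : y = x
    · subst hxy
      have h1 : γ y * (γ y * s y) = s y := by rw [← mul_assoc, hγ2, one_mul]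
      have h2 : γ y * s y * γ y = -s y := by
        rw [mul_assoc, hsγ y y, if_pos rfl, ← mul_assoc, mul_neg, hγ2, neg_mul, one_mul]
      rw [h1, h2]
      simp
    · have h1 : γ y * (γ x * s x) = -(γ x * s x * γ y) := by
        rw [mul_assoc, hsγ x y, if_neg (fun h => hxy h.symm), ← mul_assoc, ← mul_assoc,
          hγa y x hxy, neg_mul]
      rw [h1]
      simp
  -- ξ x vs s v
  have hξs : ∀ x v : X, s v * ξ x = (if x = v then (-1 : ℤ) else 1) • (ξ x * s v) := by
    intro x v
    rw [hξ x, mul_smul_comm, smul_mul_assoc, smul_comm]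
    congr 1
    by_cases hxv : x = v
    · subst hxv
      rw [if_pos rfl, ← mul_assoc, hsγ x x, if_pos rfl]
      simp [mul_assoc, hR1a]
    · rw [if_neg hxv, one_smul, ← mul_assoc, hsγ v x, if_neg (fun h => hxv h.symm),
        mul_assoc, mul_assoc, hR1b x v]
  -- sign flip helper
  have flip : ∀ (ε : ℤ) (a b : A), ε * ε = 1 → b * a = ε • (a * b) → a * b = ε • (b * a) := by
    intro ε a b hε h
    rw [h, smul_smul, hε, one_smul]
  -- Ξ_Q commutes with every γ y
  have hΞγ : ∀ y : X, ordProd ξ Q * γ y = γ y * ordProd ξ Q := by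
    intro y
    have h := list_smul_comm ξ (fun _ => (-1 : ℤ)) (γ y) (Q.sort (· ≤ ·))
      (fun x _ => hξγ x y)
    rw [List.map_const', List.prod_replicate, Finset.length_sort] at h
    rw [hQ.neg_one_pow, one_smul] at h
    exact h.symm
  -- Ξ_Q vs s v with sign
  have hΞs : ∀ v : X, ordProd ξ Q * s v =
      (if v ∈ Q then (-1 : ℤ) else 1) • (s v * ordProd ξ Q) := by
    intro v
    have h := list_smul_comm ξ (fun x => if x = v then (-1 : ℤ) else 1) (s v) (Q.sort (· ≤ ·))
      (fun x _ => hξs x v)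
    have hprod : ((Q.sort (· ≤ ·)).map (fun x => if x = v then (-1 : ℤ) else 1)).prod
        = (if v ∈ Q then (-1 : ℤ) else 1) := by
      rw [sort_map_prod]
      simp [Finset.prod_ite_eq']
    rw [hprod] at h
    exact flip _ _ _ (by split <;> norm_num) h
  constructor
  · intro J
    have h := list_smul_comm γ (fun _ => (1 : ℤ)) (ordProd ξ Q) (J.sort (· ≤ ·))
      (fun y _ => by rw [one_smul]; exact hΞγ y)
    rw [List.map_const', List.prod_replicate, one_pow, one_smul] at h
    exact h
  · intro V hV
    have h := list_smul_comm s (fun v => if v ∈ Q then (-1 : ℤ) else 1) (ordProd ξ Q)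
      (V.sort (· ≤ ·)) (fun v _ => hΞs v)
    have hprod : ((V.sort (· ≤ ·)).map (fun v => if v ∈ Q then (-1 : ℤ) else 1)).prod = 1 := by
      rw [sort_map_prod, Finset.prod_ite, Finset.prod_const, Finset.prod_const, one_pow, mul_one]
      have hcard : (V.filter (· ∈ Q)).card = (Q ∩ V).card := by
        congr 1
        rw [Finset.inter_comm, Finset.filter_mem_eq_inter]
      rw [hcard]
      exact hV.neg_one_pow
    rw [hprod, one_smul] at h
    exact h
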